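/- Suppose the vertex n has degree exactly k in the k-tree G(𝒯) (n is a leaf of G(𝒯)), and for 1 ≤ i ≤ n let T_kG_{n−1}^i be the subgraph of T_kG_n induced by the permutations p with p(n) = i. Then for any two distinct indices i ≠ j, the edges of T_kG_n joining a vertex of T_kG_{n−1}^i to a vertex of T_kG_{n−1}^j form a set of exactly k(n−2)! pairwise independent (vertex-disjoint) edges; in particular |N(T_kG_{n−1}^i) ∩ V(T_kG_{n−1}^j)| = k(n−2)!. -/
import Mathlib


/-- The transposition generating graph `G(𝒯)` of a set `T` of transpositions of `Sym(n)`: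
vertices `{1,…,n}` (modeled as `Fin n`), with an edge `i j` iff the transposition
`(i j)` belongs to `T`. -/
def transGraph {n : ℕ} (T : Set (Equiv.Perm (Fin n))) : SimpleGraph (Fin n) :=
  SimpleGraph.fromRel (fun i j => Equiv.swap i j ∈ T)

/-- The Cayley graph `Cay(Sym(n), T)`: vertices are permutations, and `g, h` are
adjacent iff `h = g * t` for some `t ∈ T`. -/
def cayley {n : ℕ} (T : Set (Equiv.Perm (Fin n))) : SimpleGraph (Equiv.Perm (Fin n)) :=
  SimpleGraph.fromRel (fun g h => ∃ t ∈ T, h = g * t)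

/-- `G` is a `k`-tree: there is a construction ordering of the vertices in which the
first `k+1` vertices are mutually adjacent, and each later vertex is joined to exactly
`k` mutually adjacent earlier vertices. -/
def IsKTree (k : ℕ) {V : Type*} [Fintype V] (G : SimpleGraph V) : Prop :=
  k + 1 ≤ Fintype.card V ∧
  ∃ e : Fin (Fintype.card V) ≃ V,
    (∀ i j : Fin (Fintype.card V), j < i → (i : ℕ) ≤ k → G.Adj (e i) (e j)) ∧
    ∀ i : Fin (Fintype.card V), k + 1 ≤ (i : ℕ) →
      {j : Fin (Fintype.card V) | j < i ∧ G.Adj (e i) (e j)}.ncard = k ∧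
      {j : Fin (Fintype.card V) | j < i ∧ G.Adj (e i) (e j)}.Pairwise
        (fun j₁ j₂ => G.Adj (e j₁) (e j₂))

/-- `F` is an `R_k`-vertex-cut of `G`: `G - F` is disconnected and every vertex of
`G - F` has at least `k` neighbors in `G - F`. -/
def IsRkCut {V : Type*} (G : SimpleGraph V) (k : ℕ) (F : Set V) : Prop :=
  ¬ (G.induce (Fᶜ : Set V)).Connected ∧
  ∀ v : V, v ∉ F → k ≤ {u : V | u ∉ F ∧ G.Adj v u}.ncard

/-- The `R_k`-vertex-connectivity `κ^k(G)`: the minimum cardinality of an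
`R_k`-vertex-cut of `G`. -/
noncomputable def rkConn {V : Type*} (G : SimpleGraph V) (k : ℕ) : ℕ :=
  sInf {m : ℕ | ∃ F : Set V, IsRkCut G k F ∧ F.ncard = m}

lemma fix_two_card (n : ℕ) (a b i j : Fin n) (hab : a ≠ b) (hij : i ≠ j) :
    {u : Equiv.Perm (Fin n) | u a = i ∧ u b = j}.ncard = Nat.factorial (n - 2) := by
  classical
  set u₀ : Equiv.Perm (Fin n) := Equiv.swap (Equiv.swap a i b) j * Equiv.swap a i with hu₀
  have h0a : u₀ a = i := by
    have hne : i ≠ Equiv.swap a i b := by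
      intro h
      have := congrArg (Equiv.swap a i) h
      rw [Equiv.swap_apply_right, Equiv.swap_apply_self] at this
      exact hab this
    simp only [hu₀, Equiv.Perm.mul_apply, Equiv.swap_apply_left]
    exact Equiv.swap_apply_of_ne_of_ne hne hij
  have h0b : u₀ b = j := by
    simp only [hu₀, Equiv.Perm.mul_apply]
    exact Equiv.swap_apply_left _ _
  have himg : {u : Equiv.Perm (Fin n) | u a = i ∧ u b = j} =
      (fun v => u₀ * v) '' {v : Equiv.Perm (Fin n) | v a = a ∧ v b = b} := by
    ext u
    constructor
    · rintro ⟨h1, h2⟩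
      refine ⟨u₀⁻¹ * u, ⟨?_, ?_⟩, by group⟩
      · simp [Equiv.Perm.mul_apply, h1, ← h0a]
      · simp [Equiv.Perm.mul_apply, h2, ← h0b]
    · rintro ⟨v, ⟨h1, h2⟩, rfl⟩
      exact ⟨by simp [Equiv.Perm.mul_apply, h1, h0a], by simp [Equiv.Perm.mul_apply, h2, h0b]⟩
  rw [himg, Set.ncard_image_of_injective _ (mul_right_injective u₀)]
  rw [← Nat.card_coe_set_eq]
  have e1 : {v : Equiv.Perm (Fin n) | v a = a ∧ v b = b} ≃
      Equiv.Perm {x : Fin n // x ≠ a ∧ x ≠ b} := by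
    refine (Equiv.subtypeEquivRight ?_).trans
      (Equiv.Perm.subtypeEquivSubtypePerm (fun x => x ≠ a ∧ x ≠ b)).symm
    intro f
    constructor
    · rintro ⟨h1, h2⟩ x hx
      rcases not_and_or.mp hx with hx | hx
      · rw [not_not.mp hx]; exact h1
      · rw [not_not.mp hx]; exact h2
    · intro h
      exact ⟨h a (by simp), h b (by simp)⟩
  rw [Nat.card_congr e1, Nat.card_eq_fintype_card, Fintype.card_perm]
  congr 1
  rw [Fintype.card_subtype]
  have : Finset.filter (fun x => x ≠ a ∧ x ≠ b) Finset.univ =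
      (Finset.univ : Finset (Fin n)) \ {a, b} := by
    ext x; simp [and_comm]
  rw [this, Finset.card_sdiff_of_subset (by simp), Finset.card_univ]
  simp [Finset.card_pair hab, Fintype.card_fin]

lemma stmt4_aux (n k : ℕ) (T : Set (Equiv.Perm (Fin n)))
    (hT : ∀ t ∈ T, Equiv.Perm.IsSwap t) (m : Fin n)
    (hleaf : ((transGraph T).neighborSet m).ncard = k)
    (i j : Fin n) (hij : i ≠ j) :
    {e : Equiv.Perm (Fin n) × Equiv.Perm (Fin n) |
        e.1 m = i ∧ e.2 m = j ∧ (cayley T).Adj e.1 e.2}.ncard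
        = k * Nat.factorial (n - 2) ∧
    (∀ e₁ ∈ {e : Equiv.Perm (Fin n) × Equiv.Perm (Fin n) |
        e.1 m = i ∧ e.2 m = j ∧ (cayley T).Adj e.1 e.2},
     ∀ e₂ ∈ {e : Equiv.Perm (Fin n) × Equiv.Perm (Fin n) |
        e.1 m = i ∧ e.2 m = j ∧ (cayley T).Adj e.1 e.2},
      e₁ ≠ e₂ → e₁.1 ≠ e₂.1 ∧ e₁.2 ≠ e₂.2) ∧
    {w : Equiv.Perm (Fin n) | w m = j ∧
        ∃ u : Equiv.Perm (Fin n), u m = i ∧ (cayley T).Adj u w}.ncard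
        = k * Nat.factorial (n - 2) := by
  classical
  set A : Set (Fin n) := (transGraph T).neighborSet m with hA
  set E : Set (Equiv.Perm (Fin n) × Equiv.Perm (Fin n)) :=
    {e | e.1 m = i ∧ e.2 m = j ∧ (cayley T).Adj e.1 e.2} with hEdef
  set S : Fin n → Set (Equiv.Perm (Fin n)) :=
    fun a => {u | u m = i ∧ u a = j} with hSdef
  -- characterization of edges
  have hchar : ∀ e : Equiv.Perm (Fin n) × Equiv.Perm (Fin n), e ∈ E ↔
      ∃ a ∈ A, e.1 m = i ∧ e.1 a = j ∧ e.2 = e.1 * Equiv.swap m a := by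
    intro e
    constructor
    · rintro ⟨h1, h2, hadj⟩
      rw [cayley, SimpleGraph.fromRel_adj] at hadj
      obtain ⟨hne, hcase⟩ := hadj
      have hmain : ∃ t ∈ T, e.2 = e.1 * t := by
        rcases hcase with ⟨t, ht, htt⟩ | ⟨t, ht, htt⟩
        · exact ⟨t, ht, htt⟩
        · refine ⟨t, ht, ?_⟩
          obtain ⟨x, y, hxy, rfl⟩ := hT t ht
          rw [htt, mul_assoc, Equiv.swap_mul_self, mul_one]
      obtain ⟨t, ht, htt⟩ := hmain
      obtain ⟨x, y, hxy, rfl⟩ := hT t ht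
      have h2' : e.1 (Equiv.swap x y m) = j := by
        rw [← Equiv.Perm.mul_apply, ← htt]; exact h2
      have htm : Equiv.swap x y m ≠ m := by
        intro h
        rw [h, h1] at h2'
        exact hij h2'
      have hm : m = x ∨ m = y := by
        by_contra h
        push_neg at h
        exact htm (Equiv.swap_apply_of_ne_of_ne h.1 h.2)
      rcases hm with rfl | rfl
      · refine ⟨y, ?_, h1, ?_, ?_⟩
        · rw [hA]; exact ⟨hxy, Or.inl ht⟩
        · rw [← h2', Equiv.swap_apply_left]
        · exact htt
      · refine ⟨x, ?_, h1, ?_, ?_⟩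
        · rw [hA]; exact ⟨(Ne.symm hxy), Or.inl (show Equiv.swap m x ∈ T by rwa [Equiv.swap_comm])⟩
        · rw [← h2', Equiv.swap_apply_right]
        · rw [htt, Equiv.swap_comm]
    · rintro ⟨a, haA, h1, h2, h3⟩
      have hadjm : (transGraph T).Adj m a := haA
      rw [transGraph, SimpleGraph.fromRel_adj] at hadjm
      obtain ⟨hma, hsw⟩ := hadjm
      have hswT : Equiv.swap m a ∈ T := by
        rcases hsw with h | h
        · exact h
        · rwa [Equiv.swap_comm]
      refine ⟨h1, ?_, ?_⟩
      · rw [h3, Equiv.Perm.mul_apply, Equiv.swap_apply_left, h2]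
      · rw [cayley, SimpleGraph.fromRel_adj]
        refine ⟨?_, Or.inl ⟨Equiv.swap m a, hswT, h3⟩⟩
        intro h
        apply hij
        rw [← h1, h, h3, Equiv.Perm.mul_apply, Equiv.swap_apply_left, h2]
  -- the sigma parametrization
  haveI : Fintype ↥A := Fintype.ofFinite _
  haveI : ∀ a : ↥A, Fintype ↥(S a.1) := fun a => Fintype.ofFinite _
  haveI : Fintype ↥E := Fintype.ofFinite _
  set f : (Σ a : ↥A, ↥(S a.1)) → ↥E := fun p =>
    ⟨(p.2.1, p.2.1 * Equiv.swap m p.1.1),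
      (hchar _).mpr ⟨p.1.1, p.1.2, p.2.2.1, p.2.2.2, rfl⟩⟩ with hf
  have hfbij : Function.Bijective f := by
    constructor
    · rintro ⟨⟨a, ha⟩, ⟨u, hu⟩⟩ ⟨⟨a', ha'⟩, ⟨u', hu'⟩⟩ h
      have hval := congrArg Subtype.val h
      simp only [hf] at hval
      have h1 : u = u' := congrArg Prod.fst hval
      subst h1
      have h2 : u * Equiv.swap m a = u * Equiv.swap m a' := congrArg Prod.snd hval
      have h3 : Equiv.swap m a = Equiv.swap m a' := mul_left_cancel h2
      have h4 : a = a' := by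
        have := congrArg (fun s => Equiv.toFun s m) h3
        simpa [Equiv.swap_apply_left] using this
      subst h4
      rfl
    · rintro ⟨e, he⟩
      obtain ⟨a, haA, h1, h2, h3⟩ := (hchar e).mp he
      refine ⟨⟨⟨a, haA⟩, ⟨e.1, h1, h2⟩⟩, ?_⟩
      apply Subtype.ext
      simp only [hf]
      exact Prod.ext rfl h3.symm
  have hma' : ∀ a : ↥A, m ≠ a.1 := fun a => (show (transGraph T).Adj m a.1 from a.2).ne
  have hEcard : E.ncard = k * Nat.factorial (n - 2) :=
    calc E.ncard = Nat.card ↥E := (Nat.card_coe_set_eq _).symm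
      _ = Nat.card (Σ a : ↥A, ↥(S a.1)) := (Nat.card_congr (Equiv.ofBijective f hfbij)).symm
      _ = ∑ a : ↥A, Nat.card ↥(S a.1) := by
            rw [Nat.card_eq_fintype_card, Fintype.card_sigma]
            exact Finset.sum_congr rfl fun a _ => Nat.card_eq_fintype_card.symm
      _ = ∑ _a : ↥A, Nat.factorial (n - 2) := by
            refine Finset.sum_congr rfl fun a _ => ?_
            rw [Nat.card_coe_set_eq]
            exact fix_two_card n m a.1 i j (hma' a) hij
      _ = Fintype.card ↥A * Nat.factorial (n - 2) := by
            rw [Finset.sum_const, smul_eq_mul, Finset.card_univ]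
      _ = k * Nat.factorial (n - 2) := by
            rw [← Nat.card_eq_fintype_card, Nat.card_coe_set_eq]
            rw [hA] at *
            rw [hleaf]
  have hdisj : ∀ e₁ ∈ E, ∀ e₂ ∈ E, e₁ ≠ e₂ → e₁.1 ≠ e₂.1 ∧ e₁.2 ≠ e₂.2 := by
    intro e₁ he₁ e₂ he₂ hne
    obtain ⟨a₁, ha₁, hi₁, hj₁, hw₁⟩ := (hchar e₁).mp he₁
    obtain ⟨a₂, ha₂, hi₂, hj₂, hw₂⟩ := (hchar e₂).mp he₂
    constructor
    · intro h
      apply hne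
      have haa : a₁ = a₂ := e₁.1.injective (by rw [hj₁, h, hj₂])
      exact Prod.ext h (by rw [hw₁, hw₂, h, haa])
    · intro h
      apply hne
      have k₁ : e₁.2 a₁ = i := by
        rw [hw₁, Equiv.Perm.mul_apply, Equiv.swap_apply_right, hi₁]
      have k₂ : e₂.2 a₂ = i := by
        rw [hw₂, Equiv.Perm.mul_apply, Equiv.swap_apply_right, hi₂]
      have haa : a₁ = a₂ := e₁.2.injective (by rw [k₁, h, k₂])
      have r₁ : e₁.1 = e₁.2 * Equiv.swap m a₁ := by
        rw [hw₁, mul_assoc, Equiv.swap_mul_self, mul_one]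
      have r₂ : e₂.1 = e₂.2 * Equiv.swap m a₂ := by
        rw [hw₂, mul_assoc, Equiv.swap_mul_self, mul_one]
      exact Prod.ext (by rw [r₁, r₂, h, haa]) h
  refine ⟨hEcard, hdisj, ?_⟩
  -- third part
  set W : Set (Equiv.Perm (Fin n)) :=
    {w | w m = j ∧ ∃ u : Equiv.Perm (Fin n), u m = i ∧ (cayley T).Adj u w} with hW
  have hWE : W.ncard = E.ncard := by
    rw [← Nat.card_coe_set_eq, ← Nat.card_coe_set_eq]
    refine Nat.card_congr (Equiv.ofBijective (fun w => ?_) ⟨?_, ?_⟩).symm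
    · exact ⟨w.1.2, w.2.2.1, w.1.1, w.2.1, w.2.2.2⟩
    · rintro ⟨e₁, he₁⟩ ⟨e₂, he₂⟩ h
      have hval : e₁.2 = e₂.2 := congrArg Subtype.val h
      apply Subtype.ext
      by_contra hne
      exact (hdisj e₁ he₁ e₂ he₂ hne).2 hval
    · rintro ⟨w, hw1, u, hu1, hadj⟩
      have hw2 : w m = j := hw1
      exact ⟨⟨(u, w), hu1, hw2, hadj⟩, rfl⟩
  rw [hWE]
  exact hEcard

/-- If the vertex `n` (the last vertex) is a leaf of the `k`-tree `G(𝒯)`, then for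
distinct indices `i ≠ j` the edges between the copies `T_kG_{n-1}^i` and `T_kG_{n-1}^j`
are exactly `k(n-2)!` in number and pairwise vertex-disjoint; in particular
`|N(T_kG_{n-1}^i) ∩ V(T_kG_{n-1}^j)| = k(n-2)!`. -/
theorem stmt4 (n k : ℕ) (hn : 1 ≤ n)
    (T : Set (Equiv.Perm (Fin n))) (hT : ∀ t ∈ T, Equiv.Perm.IsSwap t)
    (hkt : IsKTree k (transGraph T))
    (hleaf : ((transGraph T).neighborSet ⟨n - 1, by omega⟩).ncard = k)
    (i j : Fin n) (hij : i ≠ j) :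
    {e : Equiv.Perm (Fin n) × Equiv.Perm (Fin n) |
        e.1 ⟨n - 1, by omega⟩ = i ∧ e.2 ⟨n - 1, by omega⟩ = j ∧
        (cayley T).Adj e.1 e.2}.ncard = k * Nat.factorial (n - 2) ∧
    (∀ e₁ ∈ {e : Equiv.Perm (Fin n) × Equiv.Perm (Fin n) |
        e.1 ⟨n - 1, by omega⟩ = i ∧ e.2 ⟨n - 1, by omega⟩ = j ∧ (cayley T).Adj e.1 e.2},
     ∀ e₂ ∈ {e : Equiv.Perm (Fin n) × Equiv.Perm (Fin n) |
        e.1 ⟨n - 1, by omega⟩ = i ∧ e.2 ⟨n - 1, by omega⟩ = j ∧ (cayley T).Adj e.1 e.2},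
      e₁ ≠ e₂ → e₁.1 ≠ e₂.1 ∧ e₁.2 ≠ e₂.2) ∧
    {w : Equiv.Perm (Fin n) | w ⟨n - 1, by omega⟩ = j ∧
        ∃ u : Equiv.Perm (Fin n), u ⟨n - 1, by omega⟩ = i ∧
          (cayley T).Adj u w}.ncard = k * Nat.factorial (n - 2) :=
  stmt4_aux n k T hT ⟨n - 1, by omega⟩ hleaf i j hij
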